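/- arXiv:2409.04891 — 4 statements merged into one kernel-verified Lean document; each statement's English description precedes it below -/
import Mathlib

section
/- Let n, m ∈ ℕ, let M₁ be a symmetric n×n real matrix, M₂ a symmetric m×m real matrix, and let K : ℝⁿ × ℝᵐ → ℝ be twice continuously differentiable. Define H : ℝⁿ×ℝᵐ → ℝ by H(e,b) = K(e,b) − ⟨∇ₑK(e,b), e⟩ + (1/(8π))(⟨M₁e, e⟩ + ⟨M₂b, b⟩), and Φ : ℝⁿ×ℝᵐ → ℝⁿ×ℝᵐ by Φ(e,b) = (M₁e − 4π∇ₑK(e,b), b). Suppose U ⊆ ℝⁿ×ℝᵐ is open and Ψ : U → ℝⁿ×ℝᵐ is differentiable with Φ(Ψ(d,b)) = (d,b) for all (d,b) ∈ U; write Ψ(d,b) = (e(d,b), b) (the second component of Ψ is necessarily b). Then the Hamiltonian in the new variables, H̄ = H ∘ Ψ, satisfies ∇_d H̄(d,b) = e(d,b)/(4π) and ∇_b H̄(d,b) = (M₂b + 4π∇_bK(e(d,b), b))/(4π) for all (d,b) ∈ U. -/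
open Real

/-- Partial gradient of `K(e, b)` with respect to its first (electric) argument,
computed componentwise against the standard basis. -/
noncomputable def gradE {n m : ℕ} (K : (Fin n → ℝ) × (Fin m → ℝ) → ℝ)
    (e : Fin n → ℝ) (b : Fin m → ℝ) : Fin n → ℝ :=
  fun i => fderiv ℝ (fun e' => K (e', b)) e (Pi.single i 1)

/-- Partial gradient of `K(e, b)` with respect to its second (magnetic) argument. -/
noncomputable def gradB {n m : ℕ} (K : (Fin n → ℝ) × (Fin m → ℝ) → ℝ)
    (e : Fin n → ℝ) (b : Fin m → ℝ) : Fin m → ℝ :=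
  fun i => fderiv ℝ (fun b' => K (e, b')) b (Pi.single i 1)

section Aux

variable {n m : ℕ}

private lemma sum_single_pair (x : Fin n → ℝ) :
    ((x, 0) : (Fin n → ℝ) × (Fin m → ℝ))
      = ∑ i, x i • ((Pi.single i 1, 0) : (Fin n → ℝ) × (Fin m → ℝ)) := by
  ext j
  · simp [Prod.fst_sum, Finset.sum_apply, Pi.single_apply, mul_ite, Finset.sum_ite_eq']
  · simp [Prod.snd_sum]

private lemma clm_sum_left (L : ((Fin n → ℝ) × (Fin m → ℝ)) →L[ℝ] ℝ) (x : Fin n → ℝ) :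
    L ((x, 0) : (Fin n → ℝ) × (Fin m → ℝ))
      = ∑ i, x i * L ((Pi.single i 1, 0) : (Fin n → ℝ) × (Fin m → ℝ)) := by
  rw [sum_single_pair (m := m) x, map_sum]
  refine Finset.sum_congr rfl fun i _ => ?_
  rw [map_smul, smul_eq_mul]

private lemma gradE_fderiv {K : (Fin n → ℝ) × (Fin m → ℝ) → ℝ} (hK : ContDiff ℝ 2 K)
    (e : Fin n → ℝ) (b : Fin m → ℝ) (i : Fin n) :
    gradE K e b i = fderiv ℝ K (e, b) (Pi.single i 1, 0) := by
  have h : HasFDerivAt (fun e' => K (e', b))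
      ((fderiv ℝ K (e, b)).comp (ContinuousLinearMap.inl ℝ (Fin n → ℝ) (Fin m → ℝ))) e :=
    ((hK.differentiable two_ne_zero (e, b)).hasFDerivAt).comp e (hasFDerivAt_prodMk_left e b)
  rw [gradE, h.fderiv]
  simp

private lemma gradB_fderiv {K : (Fin n → ℝ) × (Fin m → ℝ) → ℝ} (hK : ContDiff ℝ 2 K)
    (e : Fin n → ℝ) (b : Fin m → ℝ) (i : Fin m) :
    gradB K e b i = fderiv ℝ K (e, b) (0, Pi.single i 1) := by
  have h : HasFDerivAt (fun b' => K (e, b'))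
      ((fderiv ℝ K (e, b)).comp (ContinuousLinearMap.inr ℝ (Fin n → ℝ) (Fin m → ℝ))) b :=
    ((hK.differentiable two_ne_zero (e, b)).hasFDerivAt).comp b (hasFDerivAt_prodMk_right e b)
  rw [gradB, h.fderiv]
  simp

private lemma hasFDerivAt_row (M : Matrix (Fin n) (Fin n) ℝ) (i : Fin n) (x₀ : Fin n → ℝ) :
    HasFDerivAt (fun x : Fin n → ℝ => M.mulVec x i)
      (∑ j, M i j • (ContinuousLinearMap.proj j : (Fin n → ℝ) →L[ℝ] ℝ)) x₀ := by
  have h : (fun x : Fin n → ℝ => M.mulVec x i) = fun x => ∑ j, M i j * x j := by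
    funext x; simp [Matrix.mulVec, dotProduct]
  rw [h]
  exact HasFDerivAt.fun_sum fun j _ =>
    ((ContinuousLinearMap.proj j : (Fin n → ℝ) →L[ℝ] ℝ).hasFDerivAt (x := x₀)).const_mul (M i j)

private lemma row_apply (M : Matrix (Fin n) (Fin n) ℝ) (i : Fin n) (w : Fin n → ℝ) :
    (∑ j, M i j • (ContinuousLinearMap.proj j : (Fin n → ℝ) →L[ℝ] ℝ)) w = M.mulVec w i := by
  simp [Matrix.mulVec, dotProduct, ContinuousLinearMap.sum_apply]

private lemma mulVec_symm {M : Matrix (Fin n) (Fin n) ℝ} (hM : M.IsSymm) (u x : Fin n → ℝ) :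
    ∑ i, M.mulVec u i * x i = ∑ i, M.mulVec x i * u i := by
  simp only [Matrix.mulVec, dotProduct, Finset.sum_mul]
  rw [Finset.sum_comm]
  refine Finset.sum_congr rfl fun i _ => Finset.sum_congr rfl fun j _ => ?_
  rw [← hM.apply i j]
  ring

private lemma quad_deriv (M : Matrix (Fin n) (Fin n) ℝ) (x₀ : Fin n → ℝ) :
    ∃ L : (Fin n → ℝ) →L[ℝ] ℝ,
      HasFDerivAt (fun x => ∑ i, M.mulVec x i * x i) L x₀ ∧
      ∀ w, L w = ∑ i, (M.mulVec w i * x₀ i + M.mulVec x₀ i * w i) := by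
  refine ⟨_, HasFDerivAt.fun_sum fun i _ =>
    (hasFDerivAt_row M i x₀).mul
      ((ContinuousLinearMap.proj i : (Fin n → ℝ) →L[ℝ] ℝ).hasFDerivAt (x := x₀)), ?_⟩
  intro w
  rw [ContinuousLinearMap.sum_apply]
  refine Finset.sum_congr rfl fun i _ => ?_
  simp only [ContinuousLinearMap.add_apply, ContinuousLinearMap.smul_apply, row_apply,
    ContinuousLinearMap.proj_apply, smul_eq_mul, Matrix.mulVec, dotProduct]
  ring

end Aux

/-- Coefficient-level constitutive identities `∇_d H̄ = e/(4π)` and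
`∇_b H̄ = (M₂ b + 4π ∇_b K)/(4π)` for the Hamiltonian
`H(e,b) = K(e,b) − ⟨∇ₑK(e,b), e⟩ + (1/(8π))(⟨M₁e,e⟩ + ⟨M₂b,b⟩)` expressed in the
variables `(d, b) = Φ(e, b) = (M₁e − 4π∇ₑK(e,b), b)` via a differentiable local
inverse `Ψ` of `Φ`. -/
theorem discrete_constitutive_gradients (n m : ℕ)
    (M₁ : Matrix (Fin n) (Fin n) ℝ) (M₂ : Matrix (Fin m) (Fin m) ℝ)
    (hM₁ : M₁.IsSymm) (hM₂ : M₂.IsSymm)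
    (K : (Fin n → ℝ) × (Fin m → ℝ) → ℝ) (hK : ContDiff ℝ 2 K)
    (H : (Fin n → ℝ) × (Fin m → ℝ) → ℝ)
    (hH : ∀ e b, H (e, b) = K (e, b) - (∑ i, gradE K e b i * e i)
      + (1 / (8 * π)) * ((∑ i, M₁.mulVec e i * e i) + ∑ i, M₂.mulVec b i * b i))
    (Φ : (Fin n → ℝ) × (Fin m → ℝ) → (Fin n → ℝ) × (Fin m → ℝ))
    (hΦ : ∀ e b, Φ (e, b) = (M₁.mulVec e - (4 * π) • gradE K e b, b))
    (U : Set ((Fin n → ℝ) × (Fin m → ℝ))) (hU : IsOpen U)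
    (Ψ : (Fin n → ℝ) × (Fin m → ℝ) → (Fin n → ℝ) × (Fin m → ℝ))
    (hΨdiff : ∀ p ∈ U, DifferentiableAt ℝ Ψ p)
    (hΨΦ : ∀ p ∈ U, Φ (Ψ p) = p) :
    ∀ d b, (d, b) ∈ U →
      (∀ i, fderiv ℝ (fun d' => H (Ψ (d', b))) d (Pi.single i 1)
          = (Ψ (d, b)).1 i / (4 * π)) ∧
      (∀ i, fderiv ℝ (fun b' => H (Ψ (d, b'))) b (Pi.single i 1)
          = (M₂.mulVec b i + 4 * π * gradB K (Ψ (d, b)).1 b i) / (4 * π)) := by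
  have h4π : (4 : ℝ) * π ≠ 0 := by positivity
  have hKd : Differentiable ℝ K := hK.differentiable two_ne_zero
  have hK'd : Differentiable ℝ (fderiv ℝ K) :=
    (hK.fderiv_right (m := 1) (by norm_num)).differentiable one_ne_zero
  set A : ((Fin n → ℝ) × (Fin m → ℝ)) →L[ℝ] ((Fin n → ℝ) × (Fin m → ℝ)) :=
    (ContinuousLinearMap.fst ℝ (Fin n → ℝ) (Fin m → ℝ)).prod 0 with hAdef
  have hA : ∀ q : (Fin n → ℝ) × (Fin m → ℝ), A q = (q.1, 0) := fun q => rfl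
  -- rewrite `H` in closed form
  have Hfun : H = fun q => K q - fderiv ℝ K q (q.1, 0)
      + (1 / (8 * π)) * ((∑ i, M₁.mulVec q.1 i * q.1 i) + ∑ i, M₂.mulVec q.2 i * q.2 i) := by
    funext q
    obtain ⟨e, b⟩ := q
    have hsum : ∑ i, gradE K e b i * e i
        = fderiv ℝ K (e, b) ((e, 0) : (Fin n → ℝ) × (Fin m → ℝ)) := by
      rw [clm_sum_left]
      exact Finset.sum_congr rfl fun i _ => by rw [gradE_fderiv hK]; ring
    rw [hH, hsum]
  -- the derivative of `H` at an arbitrary point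
  have hHderiv : ∀ q₀ : (Fin n → ℝ) × (Fin m → ℝ),
      ∃ L : ((Fin n → ℝ) × (Fin m → ℝ)) →L[ℝ] ℝ, HasFDerivAt H L q₀ ∧
      ∀ w, L w = fderiv ℝ K q₀ w
          - (fderiv ℝ (fderiv ℝ K) q₀ w (q₀.1, 0) + fderiv ℝ K q₀ (w.1, 0))
          + (1 / (8 * π)) * ((∑ i, (M₁.mulVec w.1 i * q₀.1 i + M₁.mulVec q₀.1 i * w.1 i))
            + ∑ i, (M₂.mulVec w.2 i * q₀.2 i + M₂.mulVec q₀.2 i * w.2 i)) := by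
    intro q₀
    obtain ⟨L₁, hL₁, hL₁e⟩ := quad_deriv M₁ q₀.1
    obtain ⟨L₂, hL₂, hL₂e⟩ := quad_deriv M₂ q₀.2
    have h2 : HasFDerivAt (fun q : (Fin n → ℝ) × (Fin m → ℝ) => fderiv ℝ K q (q.1, 0))
        ((fderiv ℝ K q₀).comp A + (fderiv ℝ (fderiv ℝ K) q₀).flip (A q₀)) q₀ :=
      (hK'd q₀).hasFDerivAt.clm_apply A.hasFDerivAt
    have hq1 : HasFDerivAt (fun q : (Fin n → ℝ) × (Fin m → ℝ) => ∑ i, M₁.mulVec q.1 i * q.1 i)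
        (L₁.comp (ContinuousLinearMap.fst ℝ (Fin n → ℝ) (Fin m → ℝ))) q₀ :=
      hL₁.comp q₀ hasFDerivAt_fst
    have hq2 : HasFDerivAt (fun q : (Fin n → ℝ) × (Fin m → ℝ) => ∑ i, M₂.mulVec q.2 i * q.2 i)
        (L₂.comp (ContinuousLinearMap.snd ℝ (Fin n → ℝ) (Fin m → ℝ))) q₀ :=
      hL₂.comp q₀ hasFDerivAt_snd
    refine ⟨(fderiv ℝ K q₀
        - ((fderiv ℝ K q₀).comp A + (fderiv ℝ (fderiv ℝ K) q₀).flip (A q₀)))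
        + (1 / (8 * π)) • (L₁.comp (ContinuousLinearMap.fst ℝ (Fin n → ℝ) (Fin m → ℝ))
          + L₂.comp (ContinuousLinearMap.snd ℝ (Fin n → ℝ) (Fin m → ℝ))), ?_, ?_⟩
    · rw [Hfun]
      exact ((hKd q₀).hasFDerivAt.sub h2).add ((hq1.add hq2).const_mul (1 / (8 * π)))
    · intro w
      simp only [ContinuousLinearMap.add_apply, ContinuousLinearMap.coe_sub',
        Pi.sub_apply, ContinuousLinearMap.smul_apply, ContinuousLinearMap.coe_comp',
        Function.comp_apply, ContinuousLinearMap.flip_apply, ContinuousLinearMap.coe_fst',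
        ContinuousLinearMap.coe_snd', smul_eq_mul, hL₁e, hL₂e, hA]
      ring
  -- now fix a point in U
  intro d b hdb
  have hΨp := hΨdiff (d, b) hdb
  have hDΨ : HasFDerivAt Ψ (fderiv ℝ Ψ (d, b)) (d, b) := hΨp.hasFDerivAt
  have hmemU : U ∈ nhds (d, b) := hU.mem_nhds hdb
  have hconstr : ∀ q ∈ U,
      ((M₁.mulVec (Ψ q).1 - (4 * π) • gradE K (Ψ q).1 (Ψ q).2, (Ψ q).2)
        : (Fin n → ℝ) × (Fin m → ℝ)) = q :=
    fun q hq => (hΦ (Ψ q).1 (Ψ q).2).symm.trans (hΨΦ q hq)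
  have hsndU : ∀ q ∈ U, (Ψ q).2 = q.2 := by
    intro q hq
    have h2 : ((M₁.mulVec (Ψ q).1 - (4 * π) • gradE K (Ψ q).1 (Ψ q).2, (Ψ q).2)
        : (Fin n → ℝ) × (Fin m → ℝ)).2 = q.2 := congrArg Prod.snd (hconstr q hq)
    exact h2
  have hq₀2 : (Ψ (d, b)).2 = b := hsndU (d, b) hdb
  have hfstU : ∀ q ∈ U, M₁.mulVec (Ψ q).1 - (4 * π) • gradE K (Ψ q).1 (Ψ q).2 = q.1 := by
    intro q hq
    have h2 : ((M₁.mulVec (Ψ q).1 - (4 * π) • gradE K (Ψ q).1 (Ψ q).2, (Ψ q).2)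
        : (Fin n → ℝ) × (Fin m → ℝ)).1 = q.1 := congrArg Prod.fst (hconstr q hq)
    exact h2
  -- derivative of second component of Ψ
  have hDsnd : ∀ w, (fderiv ℝ Ψ (d, b) w).2 = w.2 := by
    have h1 : HasFDerivAt (fun q => (Ψ q).2)
        ((ContinuousLinearMap.snd ℝ (Fin n → ℝ) (Fin m → ℝ)).comp (fderiv ℝ Ψ (d, b))) (d, b) :=
      hasFDerivAt_snd.comp (d, b) hDΨ
    have h2 : fderiv ℝ (fun q : (Fin n → ℝ) × (Fin m → ℝ) => (Ψ q).2) (d, b)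
        = fderiv ℝ Prod.snd (d, b) :=
      Filter.EventuallyEq.fderiv_eq (Filter.eventuallyEq_of_mem hmemU hsndU)
    rw [h1.fderiv, fderiv_snd] at h2
    intro w
    have h3 := ContinuousLinearMap.ext_iff.mp h2 w
    simpa using h3
  -- differentiated first-component constraint
  have hconD : ∀ (i : Fin n) (w : (Fin n → ℝ) × (Fin m → ℝ)),
      M₁.mulVec (fderiv ℝ Ψ (d, b) w).1 i
        - 4 * π * fderiv ℝ (fderiv ℝ K) (Ψ (d, b)) (fderiv ℝ Ψ (d, b) w)
            ((Pi.single i 1 : Fin n → ℝ), (0 : Fin m → ℝ))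
        = w.1 i := by
    intro i
    have hgU : ∀ q ∈ U, M₁.mulVec (Ψ q).1 i
        - 4 * π * fderiv ℝ K (Ψ q) ((Pi.single i 1 : Fin n → ℝ), (0 : Fin m → ℝ)) = q.1 i := by
      intro q hq
      have h := congrFun (hfstU q hq) i
      rw [Pi.sub_apply, Pi.smul_apply, smul_eq_mul, gradE_fderiv hK] at h
      exact h
    have t1 : HasFDerivAt (fun q => M₁.mulVec (Ψ q).1 i)
        ((∑ j, M₁ i j • (ContinuousLinearMap.proj j : (Fin n → ℝ) →L[ℝ] ℝ)).comp
          ((ContinuousLinearMap.fst ℝ (Fin n → ℝ) (Fin m → ℝ)).comp (fderiv ℝ Ψ (d, b))))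
        (d, b) :=
      by have := (hasFDerivAt_row M₁ i (Ψ (d, b)).1).comp (d, b) (hasFDerivAt_fst.comp (d, b) hDΨ); exact this
    have t2 : HasFDerivAt
        (fun q => fderiv ℝ K (Ψ q) ((Pi.single i 1 : Fin n → ℝ), (0 : Fin m → ℝ)))
        ((fderiv ℝ K (Ψ (d, b))).comp 0
          + ((fderiv ℝ (fderiv ℝ K) (Ψ (d, b))).comp (fderiv ℝ Ψ (d, b))).flip
              ((Pi.single i 1 : Fin n → ℝ), (0 : Fin m → ℝ))) (d, b) :=
      ((hK'd (Ψ (d, b))).hasFDerivAt.comp (d, b) hDΨ).clm_apply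
        (hasFDerivAt_const ((Pi.single i 1 : Fin n → ℝ), (0 : Fin m → ℝ)) (d, b))
    have hg : HasFDerivAt (fun q => M₁.mulVec (Ψ q).1 i
          - 4 * π * fderiv ℝ K (Ψ q) ((Pi.single i 1 : Fin n → ℝ), (0 : Fin m → ℝ))) _ (d, b) :=
      t1.sub (t2.const_mul (4 * π))
    have hr : HasFDerivAt (fun q : (Fin n → ℝ) × (Fin m → ℝ) => q.1 i)
        ((ContinuousLinearMap.proj i).comp (ContinuousLinearMap.fst ℝ (Fin n → ℝ) (Fin m → ℝ)))
        (d, b) :=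
      ((ContinuousLinearMap.proj i).comp
        (ContinuousLinearMap.fst ℝ (Fin n → ℝ) (Fin m → ℝ))).hasFDerivAt
    have heq : fderiv ℝ (fun q => M₁.mulVec (Ψ q).1 i
          - 4 * π * fderiv ℝ K (Ψ q) ((Pi.single i 1 : Fin n → ℝ), (0 : Fin m → ℝ))) (d, b)
        = fderiv ℝ (fun q : (Fin n → ℝ) × (Fin m → ℝ) => q.1 i) (d, b) :=
      Filter.EventuallyEq.fderiv_eq (Filter.eventuallyEq_of_mem hmemU hgU)
    rw [hg.fderiv, hr.fderiv] at heq
    intro w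
    have h3 := ContinuousLinearMap.ext_iff.mp heq w
    simpa [ContinuousLinearMap.sub_apply, ContinuousLinearMap.coe_sub', Pi.sub_apply,
      ContinuousLinearMap.smul_apply, ContinuousLinearMap.coe_comp', Function.comp_apply,
      ContinuousLinearMap.flip_apply, ContinuousLinearMap.coe_fst',
      ContinuousLinearMap.comp_zero, row_apply, smul_eq_mul, Matrix.mulVec, dotProduct] using h3
  -- summed version of the differentiated constraint
  have hsum2 : ∀ w : (Fin n → ℝ) × (Fin m → ℝ),
      fderiv ℝ (fderiv ℝ K) (Ψ (d, b)) (fderiv ℝ Ψ (d, b) w) (((Ψ (d, b)).1, 0))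
        = (∑ i, M₁.mulVec (fderiv ℝ Ψ (d, b) w).1 i * (Ψ (d, b)).1 i
            - ∑ i, w.1 i * (Ψ (d, b)).1 i) / (4 * π) := by
    intro w
    have hterm : ∀ i, fderiv ℝ (fderiv ℝ K) (Ψ (d, b)) (fderiv ℝ Ψ (d, b) w)
          ((Pi.single i 1 : Fin n → ℝ), (0 : Fin m → ℝ))
        = (M₁.mulVec (fderiv ℝ Ψ (d, b) w).1 i - w.1 i) / (4 * π) := by
      intro i
      have h := hconD i w
      field_simp
      linarith
    rw [clm_sum_left]
    simp only [hterm]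
    rw [eq_div_iff h4π, Finset.sum_mul, ← Finset.sum_sub_distrib]
    refine Finset.sum_congr rfl fun i _ => ?_
    field_simp
  -- final computation
  obtain ⟨L, hL, hLe⟩ := hHderiv (Ψ (d, b))
  have hcomp : HasFDerivAt (fun q => H (Ψ q)) (L.comp (fderiv ℝ Ψ (d, b))) (d, b) :=
    hL.comp (d, b) hDΨ
  constructor
  · intro i
    have hf : HasFDerivAt (fun d' => H (Ψ (d', b)))
        ((L.comp (fderiv ℝ Ψ (d, b))).comp
          (ContinuousLinearMap.inl ℝ (Fin n → ℝ) (Fin m → ℝ))) d :=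
      by have := hcomp.comp (f := fun d' : Fin n → ℝ => (d', b)) d (hasFDerivAt_prodMk_left d b); exact this
    rw [hf.fderiv]
    have hval : ((L.comp (fderiv ℝ Ψ (d, b))).comp
          (ContinuousLinearMap.inl ℝ (Fin n → ℝ) (Fin m → ℝ))) (Pi.single i 1)
        = L (fderiv ℝ Ψ (d, b) ((Pi.single i 1 : Fin n → ℝ), (0 : Fin m → ℝ))) := by
      simp
    rw [hval, hLe]
    set w : (Fin n → ℝ) × (Fin m → ℝ) := ((Pi.single i 1 : Fin n → ℝ), 0) with hw
    have hu2 : (fderiv ℝ Ψ (d, b) w).2 = 0 := hDsnd w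
    have hKu : fderiv ℝ K (Ψ (d, b)) (((fderiv ℝ Ψ (d, b) w).1, (0 : Fin m → ℝ)))
        = fderiv ℝ K (Ψ (d, b)) (fderiv ℝ Ψ (d, b) w) := by
      rw [show (((fderiv ℝ Ψ (d, b) w).1, (0 : Fin m → ℝ)) : (Fin n → ℝ) × (Fin m → ℝ))
          = fderiv ℝ Ψ (d, b) w from Prod.ext rfl hu2.symm]
    have hM₂sum : ∑ j, (M₂.mulVec (fderiv ℝ Ψ (d, b) w).2 j * (Ψ (d, b)).2 j
        + M₂.mulVec (Ψ (d, b)).2 j * (fderiv ℝ Ψ (d, b) w).2 j) = 0 := by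
      rw [hu2]; simp [Matrix.mulVec_zero]
    have hfd2 := hsum2 w
    have hw1 : ∑ j, w.1 j * (Ψ (d, b)).1 j = (Ψ (d, b)).1 i := by
      simp [hw, Pi.single_apply, ite_mul, Finset.sum_ite_eq']
    have hsym : ∑ j, M₁.mulVec (fderiv ℝ Ψ (d, b) w).1 j * (Ψ (d, b)).1 j
        = ∑ j, M₁.mulVec (Ψ (d, b)).1 j * (fderiv ℝ Ψ (d, b) w).1 j :=
      mulVec_symm hM₁ _ _
    rw [hKu, hfd2, hw1, hsym, hM₂sum, Finset.sum_add_distrib, hsym]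
    field_simp
    ring
  · intro i
    have hf : HasFDerivAt (fun b' => H (Ψ (d, b')))
        ((L.comp (fderiv ℝ Ψ (d, b))).comp
          (ContinuousLinearMap.inr ℝ (Fin n → ℝ) (Fin m → ℝ))) b :=
      by have := hcomp.comp (f := fun b' : Fin m → ℝ => (d, b')) b (hasFDerivAt_prodMk_right d b); exact this
    rw [hf.fderiv]
    have hval : ((L.comp (fderiv ℝ Ψ (d, b))).comp
          (ContinuousLinearMap.inr ℝ (Fin n → ℝ) (Fin m → ℝ))) (Pi.single i 1)
        = L (fderiv ℝ Ψ (d, b) ((0 : Fin n → ℝ), (Pi.single i 1 : Fin m → ℝ))) := by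
      simp
    rw [hval, hLe]
    set w : (Fin n → ℝ) × (Fin m → ℝ) := ((0 : Fin n → ℝ), (Pi.single i 1 : Fin m → ℝ))
      with hw
    have hu2 : (fderiv ℝ Ψ (d, b) w).2 = Pi.single i 1 := hDsnd w
    have hsplit : fderiv ℝ K (Ψ (d, b)) (fderiv ℝ Ψ (d, b) w)
        = fderiv ℝ K (Ψ (d, b)) (((fderiv ℝ Ψ (d, b) w).1, (0 : Fin m → ℝ)))
          + fderiv ℝ K (Ψ (d, b)) ((0 : Fin n → ℝ), (Pi.single i 1 : Fin m → ℝ)) := by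
      rw [← map_add, show ((((fderiv ℝ Ψ (d, b) w).1, (0 : Fin m → ℝ))
            : (Fin n → ℝ) × (Fin m → ℝ))
          + (((0 : Fin n → ℝ), (Pi.single i 1 : Fin m → ℝ)) : (Fin n → ℝ) × (Fin m → ℝ)))
          = fderiv ℝ Ψ (d, b) w from by
        rw [Prod.mk_add_mk, add_zero, zero_add]
        exact Prod.ext rfl hu2.symm]
    have hgb : fderiv ℝ K (Ψ (d, b)) ((0 : Fin n → ℝ), (Pi.single i 1 : Fin m → ℝ))
        = gradB K (Ψ (d, b)).1 b i := by
      rw [gradB_fderiv hK, show (((Ψ (d, b)).1, b) : (Fin n → ℝ) × (Fin m → ℝ)) = Ψ (d, b)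
        from Prod.ext rfl hq₀2.symm]
    have hfd2 := hsum2 w
    have hw1 : ∑ j, w.1 j * (Ψ (d, b)).1 j = 0 := by simp [hw]
    have hsym : ∑ j, M₁.mulVec (fderiv ℝ Ψ (d, b) w).1 j * (Ψ (d, b)).1 j
        = ∑ j, M₁.mulVec (Ψ (d, b)).1 j * (fderiv ℝ Ψ (d, b) w).1 j :=
      mulVec_symm hM₁ _ _
    have hb2 : ∑ j, (M₂.mulVec (fderiv ℝ Ψ (d, b) w).2 j * (Ψ (d, b)).2 j
        + M₂.mulVec (Ψ (d, b)).2 j * (fderiv ℝ Ψ (d, b) w).2 j)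
        = 2 * M₂.mulVec b i := by
      rw [hu2, hq₀2, Finset.sum_add_distrib, mulVec_symm hM₂]
      simp [Pi.single_apply, mul_ite, Finset.sum_ite_eq']
      ring
    rw [hsplit, hfd2, hw1, hsym, hb2, Finset.sum_add_distrib, hsym, hgb]
    field_simp
    ring
end

section
/- Let N₀, N₁, N₂, N₃ ∈ ℕ and let 𝕕₀ ∈ ℝ^{N₁×N₀}, 𝕕₁ ∈ ℝ^{N₂×N₁}, 𝕕₂ ∈ ℝ^{N₃×N₂} be matrices with 𝕕₁𝕕₀ = 0 and 𝕕₂𝕕₁ = 0, and let M₂ ∈ ℝ^{N₂×N₂}. Suppose D̃ : ℝ → ℝ^{N₁}, B : ℝ → ℝ^{N₂}, and E : ℝ → ℝ^{N₁} are such that D̃ and B are differentiable and satisfy D̃'(t) = 𝕕₁ᵀ M₂ B(t) and B'(t) = −𝕕₁ E(t) for all t. Then 𝕕₀ᵀ D̃(t) and 𝕕₂ B(t) are constant in t. -/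
lemma mulVec_const_of_deriv_zero {n m : ℕ} (A : Matrix (Fin m) (Fin n) ℝ)
    (f : ℝ → Fin n → ℝ) (f' : ℝ → Fin n → ℝ)
    (hf : ∀ t, HasDerivAt f (f' t) t)
    (hz : ∀ t, A.mulVec (f' t) = 0) :
    ∀ s t : ℝ, A.mulVec (f s) = A.mulVec (f t) := by
  have L : (Fin n → ℝ) →L[ℝ] (Fin m → ℝ) := LinearMap.toContinuousLinearMap A.mulVecLin
  set L : (Fin n → ℝ) →L[ℝ] (Fin m → ℝ) := LinearMap.toContinuousLinearMap A.mulVecLin with hL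
  have key : ∀ t, HasDerivAt (fun t => A.mulVec (f t)) 0 t := by
    intro t
    have := (L.hasFDerivAt.comp_hasDerivAt t (hf t))
    simpa [hL, Function.comp, Function.comp_def, Matrix.mulVecLin_apply, hz t] using this
  intro s t
  exact is_const_of_deriv_eq_zero (fun x => (key x).differentiableAt)
    (fun x => (key x).deriv) s t

/-- Discrete Gauss laws as Casimir invariants: for semi-discrete Maxwell evolution
`D̃' = 𝕕₁ᵀ M₂ B`, `B' = −𝕕₁ E` with `𝕕₁𝕕₀ = 0` and `𝕕₂𝕕₁ = 0`, the quantities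
`𝕕₀ᵀ D̃` and `𝕕₂ B` are constant in time. -/
theorem discrete_gauss_laws (N₀ N₁ N₂ N₃ : ℕ)
    (d0 : Matrix (Fin N₁) (Fin N₀) ℝ) (d1 : Matrix (Fin N₂) (Fin N₁) ℝ)
    (d2 : Matrix (Fin N₃) (Fin N₂) ℝ)
    (h10 : d1 * d0 = 0) (h21 : d2 * d1 = 0)
    (M₂ : Matrix (Fin N₂) (Fin N₂) ℝ)
    (D : ℝ → Fin N₁ → ℝ) (B : ℝ → Fin N₂ → ℝ) (E : ℝ → Fin N₁ → ℝ)
    (hD : ∀ t, HasDerivAt D (d1.transpose.mulVec (M₂.mulVec (B t))) t)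
    (hB : ∀ t, HasDerivAt B (-(d1.mulVec (E t))) t) :
    ∀ s t : ℝ, d0.transpose.mulVec (D s) = d0.transpose.mulVec (D t) ∧
      d2.mulVec (B s) = d2.mulVec (B t) := by
  intro s t
  constructor
  · refine mulVec_const_of_deriv_zero _ D _ hD (fun u => ?_) s t
    rw [Matrix.mulVec_mulVec, ← Matrix.transpose_mul, h10]
    simp
  · refine mulVec_const_of_deriv_zero _ B _ hB (fun u => ?_) s t
    rw [Matrix.mulVec_neg, Matrix.mulVec_mulVec, h21]
    simp
end

section
/- Let v, β ∈ ℝ with v ≠ 0, and define f, g : ℝ → ℝ by f(E) = (1 − v²(1 + E²))² and g(E) = ((1 − v²)(1 − βv²)/v²) E² + ((3βv² + v² − 4)/6) E⁴ + (v²/9) E⁶. Then for all E, Φ ∈ ℝ with 1 − v²(1 + E²) ≠ 0, − f'(E) Φ² / (2 f(E)) − g'(E) / (2 f(E)) = (2 v² E Φ² − (1/v² − β) E + E³/3) / (1 − v²(1 + E²)), where f' and g' denote the derivatives of f and g. Consequently, the rescaled traveling-wave system E' = Φ, Φ' = (2v²EΦ² − (1/v² − β)E + E³/3)/(1 − v²(1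 + E²)) is the noncanonical Hamiltonian system with Hamiltonian H(E, Φ) = f(E)Φ² + g(E) and Poisson matrix J(E) = [[0, (2f(E))⁻¹], [−(2f(E))⁻¹, 0]]. -/
/-- The rescaled traveling-wave system `E' = Φ`,
`Φ' = (2v²EΦ² − (1/v² − β)E + E³/3)/(1 − v²(1 + E²))` is the noncanonical
Hamiltonian system with Hamiltonian `H(E, Φ) = f(E)Φ² + g(E)` and Poisson matrix
`J(E) = [[0, (2f(E))⁻¹], [−(2f(E))⁻¹, 0]]`: one has
`−f'(E)Φ²/(2f(E)) − g'(E)/(2f(E)) = (2v²EΦ² − (1/v² − β)E + E³/3)/(1 − v²(1 + E²))`,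
so `E' = (2f(E))⁻¹ ∂_Φ H` and `Φ' = −(2f(E))⁻¹ ∂_E H`. -/
theorem traveling_wave_hamiltonian_structure (v β : ℝ) (hv : v ≠ 0)
    (f g : ℝ → ℝ)
    (hf : ∀ E, f E = (1 - v ^ 2 * (1 + E ^ 2)) ^ 2)
    (hg : ∀ E, g E = (1 - v ^ 2) * (1 - β * v ^ 2) / v ^ 2 * E ^ 2
      + (3 * β * v ^ 2 + v ^ 2 - 4) / 6 * E ^ 4 + v ^ 2 / 9 * E ^ 6) :
    ∀ E Φ : ℝ, 1 - v ^ 2 * (1 + E ^ 2) ≠ 0 →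
      (-(deriv f E) * Φ ^ 2 / (2 * f E) - deriv g E / (2 * f E)
          = (2 * v ^ 2 * E * Φ ^ 2 - (1 / v ^ 2 - β) * E + E ^ 3 / 3)
            / (1 - v ^ 2 * (1 + E ^ 2))) ∧
      (Φ = (2 * f E)⁻¹ * deriv (fun Φ' => f E * Φ' ^ 2 + g E) Φ) ∧
      ((2 * v ^ 2 * E * Φ ^ 2 - (1 / v ^ 2 - β) * E + E ^ 3 / 3)
            / (1 - v ^ 2 * (1 + E ^ 2))
          = -(2 * f E)⁻¹ * deriv (fun E' => f E' * Φ ^ 2 + g E') E) := by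
  have hfe : f = fun x => (1 - v ^ 2 * (1 + x ^ 2)) ^ 2 := funext hf
  have hge : g = fun x => (1 - v ^ 2) * (1 - β * v ^ 2) / v ^ 2 * x ^ 2
      + (3 * β * v ^ 2 + v ^ 2 - 4) / 6 * x ^ 4 + v ^ 2 / 9 * x ^ 6 := funext hg
  subst hfe hge
  intro E Φ hE
  have hfne : (1 - v ^ 2 * (1 + E ^ 2)) ^ 2 ≠ 0 := pow_ne_zero _ hE
  have hD : HasDerivAt (fun x : ℝ => 1 - v ^ 2 * (1 + x ^ 2)) (-(v ^ 2 * (2 * E))) E := by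
    simpa using (((hasDerivAt_pow 2 E).const_add 1).const_mul (v ^ 2)).const_sub 1
  have hF : HasDerivAt (fun x : ℝ => (1 - v ^ 2 * (1 + x ^ 2)) ^ 2)
      (2 * (1 - v ^ 2 * (1 + E ^ 2)) * (-(v ^ 2 * (2 * E)))) E := by
    simpa [mul_comm] using hD.fun_pow 2
  have hG : HasDerivAt (fun x : ℝ => (1 - v ^ 2) * (1 - β * v ^ 2) / v ^ 2 * x ^ 2
      + (3 * β * v ^ 2 + v ^ 2 - 4) / 6 * x ^ 4 + v ^ 2 / 9 * x ^ 6)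
      ((1 - v ^ 2) * (1 - β * v ^ 2) / v ^ 2 * (2 * E)
        + (3 * β * v ^ 2 + v ^ 2 - 4) / 6 * (4 * E ^ 3) + v ^ 2 / 9 * (6 * E ^ 5)) E := by
    have h2 := (hasDerivAt_pow 2 E).const_mul ((1 - v ^ 2) * (1 - β * v ^ 2) / v ^ 2)
    have h4 := (hasDerivAt_pow 4 E).const_mul ((3 * β * v ^ 2 + v ^ 2 - 4) / 6)
    have h6 := (hasDerivAt_pow 6 E).const_mul (v ^ 2 / 9)
    have := (h2.fun_add h4).fun_add h6
    refine this.congr_deriv ?_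
    norm_num
  have hdf : deriv (fun x : ℝ => (1 - v ^ 2 * (1 + x ^ 2)) ^ 2) E
      = 2 * (1 - v ^ 2 * (1 + E ^ 2)) * (-(v ^ 2 * (2 * E))) := hF.deriv
  have hdg : deriv (fun x : ℝ => (1 - v ^ 2) * (1 - β * v ^ 2) / v ^ 2 * x ^ 2
      + (3 * β * v ^ 2 + v ^ 2 - 4) / 6 * x ^ 4 + v ^ 2 / 9 * x ^ 6) E
      = ((1 - v ^ 2) * (1 - β * v ^ 2) / v ^ 2 * (2 * E)
        + (3 * β * v ^ 2 + v ^ 2 - 4) / 6 * (4 * E ^ 3) + v ^ 2 / 9 * (6 * E ^ 5)) := hG.deriv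
  have hdH : deriv (fun E' : ℝ => (1 - v ^ 2 * (1 + E' ^ 2)) ^ 2 * Φ ^ 2
      + ((1 - v ^ 2) * (1 - β * v ^ 2) / v ^ 2 * E' ^ 2
        + (3 * β * v ^ 2 + v ^ 2 - 4) / 6 * E' ^ 4 + v ^ 2 / 9 * E' ^ 6)) E
      = 2 * (1 - v ^ 2 * (1 + E ^ 2)) * (-(v ^ 2 * (2 * E))) * Φ ^ 2
        + ((1 - v ^ 2) * (1 - β * v ^ 2) / v ^ 2 * (2 * E)
          + (3 * β * v ^ 2 + v ^ 2 - 4) / 6 * (4 * E ^ 3) + v ^ 2 / 9 * (6 * E ^ 5)) :=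
    ((hF.mul_const (Φ ^ 2)).add hG).deriv
  have hdΦ : deriv (fun Φ' : ℝ => (1 - v ^ 2 * (1 + E ^ 2)) ^ 2 * Φ' ^ 2
      + ((1 - v ^ 2) * (1 - β * v ^ 2) / v ^ 2 * E ^ 2
        + (3 * β * v ^ 2 + v ^ 2 - 4) / 6 * E ^ 4 + v ^ 2 / 9 * E ^ 6)) Φ
      = (1 - v ^ 2 * (1 + E ^ 2)) ^ 2 * (2 * Φ) := by
    have := (((hasDerivAt_pow 2 Φ).const_mul ((1 - v ^ 2 * (1 + E ^ 2)) ^ 2)).add_const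
      ((1 - v ^ 2) * (1 - β * v ^ 2) / v ^ 2 * E ^ 2
        + (3 * β * v ^ 2 + v ^ 2 - 4) / 6 * E ^ 4 + v ^ 2 / 9 * E ^ 6)).deriv
    simpa using this
  refine ⟨?_, ?_, ?_⟩
  · rw [hdf, hdg]
    field_simp
    ring
  · rw [hdΦ]
    field_simp
  · rw [hdH]
    field_simp
    ring
end

section
/- Let v, β ∈ ℝ with v ≠ 0, and define f, g : ℝ → ℝ by f(E) = (1 − v²(1 + E²))² and g(E) = ((1 − v²)(1 − βv²)/v²) E² + ((3βv² + v² − 4)/6) E⁴ + (v²/9) E⁶. Suppose E, Φ : ℝ → ℝ are differentiable and satisfy, for all ξ ∈ ℝ, 1 − v²(1 + E(ξ)²) ≠ 0, E'(ξ) = Φ(ξ), and Φ'(ξ) = (2v²E(ξ)Φ(ξ)² − (1/v² − β)E(ξ) + E(ξ)³/3)/(1 − v²(1 + E(ξ)²)). Then the function ξ ↦ f(E(ξ))Φ(ξ)² + g(E(ξ)) is constant on ℝ. -/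
/-- Conservation of the traveling-wave Hamiltonian `H = f(E)Φ² + g(E)` along
solutions of the rescaled traveling-wave system `E' = Φ`,
`Φ' = (2v²EΦ² − (1/v² − β)E + E³/3)/(1 − v²(1 + E²))`. -/
theorem traveling_wave_hamiltonian_conserved (v β : ℝ) (hv : v ≠ 0)
    (f g : ℝ → ℝ)
    (hf : ∀ E, f E = (1 - v ^ 2 * (1 + E ^ 2)) ^ 2)
    (hg : ∀ E, g E = (1 - v ^ 2) * (1 - β * v ^ 2) / v ^ 2 * E ^ 2
      + (3 * β * v ^ 2 + v ^ 2 - 4) / 6 * E ^ 4 + v ^ 2 / 9 * E ^ 6)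
    (E Φ : ℝ → ℝ)
    (hden : ∀ ξ : ℝ, 1 - v ^ 2 * (1 + E ξ ^ 2) ≠ 0)
    (hE : ∀ ξ : ℝ, HasDerivAt E (Φ ξ) ξ)
    (hΦ : ∀ ξ : ℝ, HasDerivAt Φ
      ((2 * v ^ 2 * E ξ * Φ ξ ^ 2 - (1 / v ^ 2 - β) * E ξ + E ξ ^ 3 / 3)
        / (1 - v ^ 2 * (1 + E ξ ^ 2))) ξ) :
    ∀ ξ₁ ξ₂ : ℝ, f (E ξ₁) * Φ ξ₁ ^ 2 + g (E ξ₁)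
      = f (E ξ₂) * Φ ξ₂ ^ 2 + g (E ξ₂) := by
  have key : ∀ ξ : ℝ, HasDerivAt (fun ξ => f (E ξ) * Φ ξ ^ 2 + g (E ξ)) 0 ξ := by
    intro ξ
    have hfun : (fun ξ => f (E ξ) * Φ ξ ^ 2 + g (E ξ))
        = fun ξ => (1 - v ^ 2 * (1 + E ξ ^ 2)) ^ 2 * Φ ξ ^ 2
          + ((1 - v ^ 2) * (1 - β * v ^ 2) / v ^ 2 * E ξ ^ 2
            + (3 * β * v ^ 2 + v ^ 2 - 4) / 6 * E ξ ^ 4 + v ^ 2 / 9 * E ξ ^ 6) := by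
      funext x; rw [hf, hg]
    rw [hfun]
    have h1 : HasDerivAt (fun ξ => (1 - v ^ 2 * (1 + E ξ ^ 2)) ^ 2)
        (2 * (1 - v ^ 2 * (1 + E ξ ^ 2)) ^ 1 *
          (-(v ^ 2 * (2 * E ξ ^ 1 * Φ ξ)))) ξ :=
      ((((hE ξ).pow 2).const_add 1).const_mul (v ^ 2)).const_sub 1 |>.pow 2
    have h2 : HasDerivAt (fun ξ => Φ ξ ^ 2)
        (2 * Φ ξ ^ 1 * ((2 * v ^ 2 * E ξ * Φ ξ ^ 2 - (1 / v ^ 2 - β) * E ξ + E ξ ^ 3 / 3)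
          / (1 - v ^ 2 * (1 + E ξ ^ 2)))) ξ := (hΦ ξ).pow 2
    have h3 : HasDerivAt (fun ξ => (1 - v ^ 2) * (1 - β * v ^ 2) / v ^ 2 * E ξ ^ 2
          + (3 * β * v ^ 2 + v ^ 2 - 4) / 6 * E ξ ^ 4 + v ^ 2 / 9 * E ξ ^ 6)
        ((1 - v ^ 2) * (1 - β * v ^ 2) / v ^ 2 * (2 * E ξ ^ 1 * Φ ξ)
          + (3 * β * v ^ 2 + v ^ 2 - 4) / 6 * (4 * E ξ ^ 3 * Φ ξ)
          + v ^ 2 / 9 * (6 * E ξ ^ 5 * Φ ξ)) ξ :=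
      ((((hE ξ).pow 2).const_mul _).add (((hE ξ).pow 4).const_mul _)).add
        (((hE ξ).pow 6).const_mul _)
    have hmain := (h1.mul h2).add h3
    refine hmain.congr_deriv ?_
    have hd := hden ξ
    field_simp
    ring
  intro ξ₁ ξ₂
  exact is_const_of_deriv_eq_zero (fun x => (key x).differentiableAt)
    (fun x => (key x).deriv) ξ₁ ξ₂
end
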